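/- Combining the previous facts: let Ψ be doubly stochastic with Ψ^τ → (1/n)𝟙𝟙^T, let P ⊆ {1,...,n} be nonempty, C > 0, Y_i[0] = C·[i ∈ P], y_i[0] = C x_i·[i ∈ P]. Then for each agent i, lim_{τ→∞} Y_i[τ]^{-1} y_i[τ] = (1/|P|) ∑_{j∈P} x_j, where Y[τ] = Ψ^τ Y[0] and y[τ] = Ψ^τ y[0]. -/

import Mathlib

open Matrix Filter Topology

theorem bridge_consensus_main (n : ℕ) (hn : 0 < n)
    (Ψ : Matrix (Fin n) (Fin n) ℝ)
    (hnonneg : ∀ i j, 0 ≤ Ψ i j)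
    (hrow : ∀ i, ∑ j, Ψ i j = 1) (hcol : ∀ j, ∑ i, Ψ i j = 1)
    (hconv : Tendsto (fun τ : ℕ => Ψ ^ τ) atTop
      (𝓝 (Matrix.of fun _ _ : Fin n => (n : ℝ)⁻¹)))
    (P : Finset (Fin n)) (hP : P.Nonempty)
    (C : ℝ) (hC : 0 < C) (x : Fin n → ℝ) (Y0 y0 : Fin n → ℝ)
    (hY0 : ∀ i, Y0 i = if i ∈ P then C else 0)
    (hy0 : ∀ i, y0 i = if i ∈ P then C * x i else 0)
    (i : Fin n) :
    Tendsto (fun τ : ℕ => ((Ψ ^ τ).mulVec Y0 i)⁻¹ * (Ψ ^ τ).mulVec y0 i)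
      atTop (𝓝 ((P.card : ℝ)⁻¹ * ∑ j ∈ P, x j)) := by
  have hentry : ∀ j, Tendsto (fun τ : ℕ => (Ψ ^ τ) i j) atTop (𝓝 ((n : ℝ)⁻¹)) := by
    intro j
    have := (continuous_apply j).comp (continuous_apply i) |>.continuousAt.tendsto.comp hconv
    exact this
  have hmv : ∀ (v : Fin n → ℝ),
      Tendsto (fun τ : ℕ => (Ψ ^ τ).mulVec v i) atTop (𝓝 ((n : ℝ)⁻¹ * ∑ j, v j)) := by
    intro v
    have : Tendsto (fun τ : ℕ => ∑ j, (Ψ ^ τ) i j * v j) atTop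
        (𝓝 (∑ j, (n : ℝ)⁻¹ * v j)) :=
      tendsto_finset_sum _ fun j _ => (hentry j).mul_const (v j)
    simpa [Matrix.mulVec, dotProduct, Finset.mul_sum] using this
  have hsY : ∑ j, Y0 j = C * P.card := by
    simp [hY0, Finset.sum_ite_mem, mul_comm]
  have hsy : ∑ j, y0 j = C * ∑ j ∈ P, x j := by
    simp [hy0, Finset.sum_ite_mem, Finset.mul_sum]
  have hY : Tendsto (fun τ : ℕ => (Ψ ^ τ).mulVec Y0 i) atTop
      (𝓝 ((n : ℝ)⁻¹ * (C * P.card))) := hsY ▸ hmv Y0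
  have hy : Tendsto (fun τ : ℕ => (Ψ ^ τ).mulVec y0 i) atTop
      (𝓝 ((n : ℝ)⁻¹ * (C * ∑ j ∈ P, x j))) := hsy ▸ hmv y0
  have hne : ((n : ℝ)⁻¹ * (C * P.card)) ≠ 0 := by
    have hcard : (0 : ℝ) < P.card := by exact_mod_cast Finset.card_pos.mpr hP
    positivity
  have := (hY.inv₀ hne).mul hy
  convert this using 2
  have hn' : (n : ℝ) ≠ 0 := by positivity
  have hcard : (P.card : ℝ) ≠ 0 := by
    exact_mod_cast (Finset.card_pos.mpr hP).ne'
  field_simp
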